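/- If ∑_k ∑_l |⟨ψ_l,ψ_k⟩|² < ∞, then dom(D) = ℓ² and (ψ_k) is a Bessel sequence for H. -/

import Mathlib

open Filter Topology
open scoped ComplexInnerProductSpace

lemma key5 {H : Type*} [NormedAddCommGroup H] [InnerProductSpace ℂ H]
    (ψ : ℕ → H)
    (h₁ : ∀ k : ℕ, Summable fun l => ‖⟪ψ k, ψ l⟫‖ ^ 2)
    (h₂ : Summable fun k => ∑' l, ‖⟪ψ k, ψ l⟫‖ ^ 2)
    (F : Finset ℕ) (c : ℕ → ℂ) :
    ‖∑ k ∈ F, c k • ψ k‖ ^ 2 ≤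
      Real.sqrt (∑' k, ∑' l, ‖⟪ψ k, ψ l⟫‖ ^ 2) * ∑ k ∈ F, ‖c k‖ ^ 2 := by
  set t : ℕ → ℝ := fun k => ∑' l, ‖⟪ψ k, ψ l⟫‖ ^ 2 with ht
  set B₀ : ℝ := ∑' k, t k with hB₀
  have htnn : ∀ k, 0 ≤ t k := fun k => tsum_nonneg fun l => sq_nonneg _
  have hB₀nn : 0 ≤ B₀ := tsum_nonneg htnn
  set S : ℝ := ∑ k ∈ F, ‖c k‖ ^ 2 with hS
  have hSnn : 0 ≤ S := Finset.sum_nonneg fun k _ => sq_nonneg _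
  -- step 1
  have step1 : ‖∑ k ∈ F, c k • ψ k‖ ^ 2 ≤
      ∑ k ∈ F, ∑ l ∈ F, ‖c k‖ * ‖c l‖ * ‖⟪ψ k, ψ l⟫‖ := by
    rw [← inner_self_eq_norm_sq (𝕜 := ℂ), sum_inner]
    simp only [inner_sum, inner_smul_left, inner_smul_right, map_sum]
    refine Finset.sum_le_sum fun k _ => ?_
    refine (Finset.sum_le_sum fun l _ => ?_)
    calc RCLike.re (c l * ((starRingEnd ℂ) (c k) * ⟪ψ k, ψ l⟫))
        ≤ ‖c l * ((starRingEnd ℂ) (c k) * ⟪ψ k, ψ l⟫)‖ := RCLike.re_le_norm _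
      _ = ‖c k‖ * ‖c l‖ * ‖⟪ψ k, ψ l⟫‖ := by
          rw [norm_mul, norm_mul, RCLike.norm_conj]; ring
  -- inner Cauchy-Schwarz
  have inner_cs : ∀ k ∈ F, ∑ l ∈ F, ‖c l‖ * ‖⟪ψ k, ψ l⟫‖ ≤
      Real.sqrt S * Real.sqrt (t k) := by
    intro k _
    have h := Finset.sum_mul_sq_le_sq_mul_sq F (fun l => ‖c l‖) (fun l => ‖⟪ψ k, ψ l⟫‖)
    have hle : (∑ l ∈ F, ‖c l‖ * ‖⟪ψ k, ψ l⟫‖) ^ 2 ≤ S * t k := by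
      refine h.trans ?_
      exact mul_le_mul_of_nonneg_left (Summable.sum_le_tsum F (fun l _ => sq_nonneg _) (h₁ k)) hSnn
    have hnn : 0 ≤ ∑ l ∈ F, ‖c l‖ * ‖⟪ψ k, ψ l⟫‖ :=
      Finset.sum_nonneg fun l _ => mul_nonneg (norm_nonneg _) (norm_nonneg _)
    calc ∑ l ∈ F, ‖c l‖ * ‖⟪ψ k, ψ l⟫‖
        = Real.sqrt ((∑ l ∈ F, ‖c l‖ * ‖⟪ψ k, ψ l⟫‖) ^ 2) := (Real.sqrt_sq hnn).symm
      _ ≤ Real.sqrt (S * t k) := Real.sqrt_le_sqrt hle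
      _ = Real.sqrt S * Real.sqrt (t k) := Real.sqrt_mul hSnn _
  -- outer Cauchy-Schwarz
  have outer : ∑ k ∈ F, ‖c k‖ * Real.sqrt (t k) ≤ Real.sqrt S * Real.sqrt B₀ := by
    have h := Finset.sum_mul_sq_le_sq_mul_sq F (fun k => ‖c k‖) (fun k => Real.sqrt (t k))
    have h2 : (∑ k ∈ F, ‖c k‖ * Real.sqrt (t k)) ^ 2 ≤ S * B₀ := by
      refine h.trans ?_
      have : ∑ k ∈ F, Real.sqrt (t k) ^ 2 = ∑ k ∈ F, t k := by
        refine Finset.sum_congr rfl fun k _ => Real.sq_sqrt (htnn k)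
      rw [this]
      exact mul_le_mul_of_nonneg_left (Summable.sum_le_tsum F (fun k _ => htnn k) h₂) hSnn
    have hnn : 0 ≤ ∑ k ∈ F, ‖c k‖ * Real.sqrt (t k) :=
      Finset.sum_nonneg fun k _ => mul_nonneg (norm_nonneg _) (Real.sqrt_nonneg _)
    calc ∑ k ∈ F, ‖c k‖ * Real.sqrt (t k)
        = Real.sqrt ((∑ k ∈ F, ‖c k‖ * Real.sqrt (t k)) ^ 2) := (Real.sqrt_sq hnn).symm
      _ ≤ Real.sqrt (S * B₀) := Real.sqrt_le_sqrt h2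
      _ = Real.sqrt S * Real.sqrt B₀ := Real.sqrt_mul hSnn _
  calc ‖∑ k ∈ F, c k • ψ k‖ ^ 2
      ≤ ∑ k ∈ F, ∑ l ∈ F, ‖c k‖ * ‖c l‖ * ‖⟪ψ k, ψ l⟫‖ := step1
    _ ≤ ∑ k ∈ F, ‖c k‖ * (Real.sqrt S * Real.sqrt (t k)) := by
        refine Finset.sum_le_sum fun k hk => ?_
        have : ∑ l ∈ F, ‖c k‖ * ‖c l‖ * ‖⟪ψ k, ψ l⟫‖
            = ‖c k‖ * ∑ l ∈ F, ‖c l‖ * ‖⟪ψ k, ψ l⟫‖ := by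
          rw [Finset.mul_sum]; exact Finset.sum_congr rfl fun l _ => by ring
        rw [this]
        exact mul_le_mul_of_nonneg_left (inner_cs k hk) (norm_nonneg _)
    _ = Real.sqrt S * ∑ k ∈ F, ‖c k‖ * Real.sqrt (t k) := by
        rw [Finset.mul_sum]; exact Finset.sum_congr rfl fun k _ => by ring
    _ ≤ Real.sqrt S * (Real.sqrt S * Real.sqrt B₀) :=
        mul_le_mul_of_nonneg_left outer (Real.sqrt_nonneg _)
    _ = Real.sqrt B₀ * S := by
        rw [← mul_assoc, Real.mul_self_sqrt hSnn]; ring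

theorem stmt5 {H : Type*} [NormedAddCommGroup H] [InnerProductSpace ℂ H] [CompleteSpace H]
    (ψ : ℕ → H)
    (h₁ : ∀ k : ℕ, Summable fun l => ‖⟪ψ k, ψ l⟫‖ ^ 2)
    (h₂ : Summable fun k => ∑' l, ‖⟪ψ k, ψ l⟫‖ ^ 2) :
    (∀ c : lp (fun _ : ℕ => ℂ) 2,
      ∃ s : H, Tendsto (fun n => ∑ k ∈ Finset.range n, (c : ℕ → ℂ) k • ψ k) atTop (𝓝 s))
    ∧ (∃ B : ℝ, 0 < B ∧ ∀ f : H,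
        (Summable fun k => ‖⟪ψ k, f⟫‖ ^ 2) ∧ ∑' k, ‖⟪ψ k, f⟫‖ ^ 2 ≤ B * ‖f‖ ^ 2) := by
  set B₀ : ℝ := ∑' k, ∑' l, ‖⟪ψ k, ψ l⟫‖ ^ 2 with hB₀
  have hB₀nn : 0 ≤ B₀ := tsum_nonneg fun k => tsum_nonneg fun l => sq_nonneg _
  have key := key5 ψ h₁ h₂
  constructor
  · intro c
    have hc : Summable fun k => ‖(c : ℕ → ℂ) k‖ ^ 2 := by
      have := (lp.memℓp c).summable (by norm_num)
      simpa [ENNReal.toReal_ofNat, Real.rpow_natCast] using this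
    have hsum : Summable fun k => (c : ℕ → ℂ) k • ψ k := by
      rw [summable_iff_vanishing_norm]
      intro ε hε
      have hδ : 0 < ε ^ 2 / (Real.sqrt B₀ + 1) := by positivity
      obtain ⟨s, hs⟩ := summable_iff_vanishing_norm.mp hc _ hδ
      refine ⟨s, fun t htdisj => ?_⟩
      have h1 : ‖∑ k ∈ t, (c : ℕ → ℂ) k • ψ k‖ ^ 2 ≤
          Real.sqrt B₀ * ∑ k ∈ t, ‖(c : ℕ → ℂ) k‖ ^ 2 := key t _
      have h2 := hs t htdisj
      have h3 : ∑ k ∈ t, ‖(c : ℕ → ℂ) k‖ ^ 2 < ε ^ 2 / (Real.sqrt B₀ + 1) := by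
        have hnn : 0 ≤ ∑ k ∈ t, ‖(c : ℕ → ℂ) k‖ ^ 2 :=
          Finset.sum_nonneg fun k _ => sq_nonneg _
        calc ∑ k ∈ t, ‖(c : ℕ → ℂ) k‖ ^ 2 = ‖∑ k ∈ t, ‖(c : ℕ → ℂ) k‖ ^ 2‖ :=
              (Real.norm_of_nonneg hnn).symm
          _ < _ := h2
      have h4 : ‖∑ k ∈ t, (c : ℕ → ℂ) k • ψ k‖ ^ 2 < ε ^ 2 := by
        calc ‖∑ k ∈ t, (c : ℕ → ℂ) k • ψ k‖ ^ 2
            ≤ Real.sqrt B₀ * ∑ k ∈ t, ‖(c : ℕ → ℂ) k‖ ^ 2 := h1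
          _ ≤ (Real.sqrt B₀ + 1) * ∑ k ∈ t, ‖(c : ℕ → ℂ) k‖ ^ 2 := by
              refine mul_le_mul_of_nonneg_right (by linarith) ?_
              exact Finset.sum_nonneg fun k _ => sq_nonneg _
          _ < (Real.sqrt B₀ + 1) * (ε ^ 2 / (Real.sqrt B₀ + 1)) := by
              refine (mul_lt_mul_iff_right₀ (by positivity)).mpr h3
          _ = ε ^ 2 := by field_simp
      nlinarith [norm_nonneg (∑ k ∈ t, (c : ℕ → ℂ) k • ψ k)]
    exact ⟨∑' k, (c : ℕ → ℂ) k • ψ k, hsum.hasSum.tendsto_sum_nat⟩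
  · refine ⟨Real.sqrt B₀ + 1, by positivity, fun f => ?_⟩
    have hbd : ∀ F : Finset ℕ, ∑ k ∈ F, ‖⟪ψ k, f⟫‖ ^ 2 ≤ (Real.sqrt B₀ + 1) * ‖f‖ ^ 2 := by
      intro F
      set S : ℝ := ∑ k ∈ F, ‖⟪ψ k, f⟫‖ ^ 2 with hS
      have hSnn : 0 ≤ S := Finset.sum_nonneg fun k _ => sq_nonneg _
      set g : H := ∑ k ∈ F, ⟪ψ k, f⟫ • ψ k with hg
      have hip : ⟪g, f⟫ = (S : ℂ) := by
        rw [hg, sum_inner]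
        push_cast [hS]
        refine Finset.sum_congr rfl fun k _ => ?_
        rw [inner_smul_left, RCLike.conj_mul]
        norm_cast
      have hS1 : S ≤ ‖g‖ * ‖f‖ := by
        have := norm_inner_le_norm (𝕜 := ℂ) g f
        rw [hip] at this
        simpa [abs_of_nonneg hSnn] using this
      have hg2 : ‖g‖ ^ 2 ≤ Real.sqrt B₀ * S := key F _
      -- S^2 ≤ ‖g‖^2 ‖f‖^2 ≤ √B₀ S ‖f‖^2
      have hS2 : S ^ 2 ≤ Real.sqrt B₀ * S * ‖f‖ ^ 2 := by
        nlinarith [norm_nonneg g, norm_nonneg f]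
      rcases eq_or_lt_of_le hSnn with h0 | h0
      · rw [← h0]; positivity
      · have : S ≤ Real.sqrt B₀ * ‖f‖ ^ 2 := by
          have := (mul_le_mul_iff_left₀ h0).mp (by nlinarith : S * S ≤ (Real.sqrt B₀ * ‖f‖ ^ 2) * S)
          linarith
        nlinarith [sq_nonneg ‖f‖]
    have hsummable : Summable fun k => ‖⟪ψ k, f⟫‖ ^ 2 :=
      summable_of_sum_le (fun k => sq_nonneg _) hbd
    exact ⟨hsummable, Summable.tsum_le_of_sum_le hsummable hbd⟩
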